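/- Let (W,S) be a Coxeter system and u ∈ W. The idempotent P^u ∘ P^u = P^u holds (where P^u is the composition of single-generator projections along a reduced expression of u) if and only if u = w₀(J) for some J ⊆ S with W_J finite, i.e., u is the longest element of a finite standard parabolic subgroup. -/

import Mathlib

open CoxeterSystem

variable {B W : Type*} [Group W] {M : CoxeterMatrix B}

/-- The projection `P^{{s}}` onto `W^{{s}}`: removes a trailing `s` if that shortens `w`. -/
noncomputable def CoxeterSystem.projSimple (cs : CoxeterSystem M W) (s : B) (w : W) : W :=
  if cs.length (w * cs.simple s) < cs.length w then w * cs.simple s else w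

/-- For a word `ω = s₁ ⋯ s_k`, the composition `P^{{s₁}} ∘ ⋯ ∘ P^{{s_k}}`. -/
noncomputable def CoxeterSystem.projWord (cs : CoxeterSystem M W) (ω : List B) : W → W :=
  ω.foldr (fun s g => cs.projSimple s ∘ g) id

/-- The Bruhat order, via the subword property: `u ≤ v` iff some reduced word for `v`
has a subword whose product is `u`. -/
def CoxeterSystem.bruhatLE (cs : CoxeterSystem M W) (u v : W) : Prop :=
  ∃ ω : List B, cs.IsReduced ω ∧ cs.wordProd ω = v ∧
    ∃ ω' : List B, ω'.Sublist ω ∧ cs.wordProd ω' = u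

/-- The standard parabolic subgroup `W_J`. -/
def CoxeterSystem.parabolic (cs : CoxeterSystem M W) (J : Set B) : Subgroup W :=
  Subgroup.closure (cs.simple '' J)

open List

namespace CoxeterSystem

variable (cs : CoxeterSystem M W)


private lemma mul_pow_comm_aux (a b : W) (k : ℕ) : a * (b * a) ^ k = (a * b) ^ k * a := by
  induction k with
  | zero => simp
  | succ k ih =>
    rw [pow_succ, pow_succ, ← mul_assoc, ih]
    group

private lemma conj_eq_iff' (a x c : W) : a * x * a⁻¹ = c ↔ x = a⁻¹ * c * a := by
  constructor
  · rintro rfl; group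
  · rintro rfl; group

open Classical in
/-- Indicator of equality, valued in `ZMod 2`. -/
noncomputable def chi (x y : W) : ZMod 2 := if x = y then 1 else 0

lemma chi_conj (a x c : W) : chi (a * x * a⁻¹) c = chi x (a⁻¹ * c * a) := by
  unfold chi
  by_cases h : x = a⁻¹ * c * a
  · rw [if_pos h, if_pos (by rw [h]; group)]
  · rw [if_neg (fun hc => h ((conj_eq_iff' a x c).mp hc)), if_neg h]

/-- The sign-flipping endomorphism used to build the reflection cocycle. -/
noncomputable def nflip (i : B) : Function.End (W × ZMod 2) :=
  fun p => (cs.simple i * p.1 * cs.simple i, p.2 + chi p.1 (cs.simple i))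

private lemma invol_conj1 (a b : W) (ha : a * a = 1) (hb : b * b = 1) (k : ℕ) :
    ((a * b) ^ k)⁻¹ * b * (a * b) ^ k = (b * a) ^ (2 * k) * b := by
  have ha' : a⁻¹ = a := inv_eq_of_mul_eq_one_right ha
  have hb' : b⁻¹ = b := inv_eq_of_mul_eq_one_right hb
  have h1 : ((a * b) ^ k)⁻¹ = (b * a) ^ k := by
    rw [← inv_pow, mul_inv_rev, ha', hb']
  rw [h1, mul_assoc, mul_pow_comm_aux, ← mul_assoc, ← pow_add, two_mul]

private lemma invol_conj2 (a b : W) (ha : a * a = 1) (hb : b * b = 1) (k : ℕ) :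
    ((a * b) ^ k)⁻¹ * (b * a * b) * (a * b) ^ k = (b * a) ^ (2 * k + 1) * b := by
  have ha' : a⁻¹ = a := inv_eq_of_mul_eq_one_right ha
  have hb' : b⁻¹ = b := inv_eq_of_mul_eq_one_right hb
  have h1 : ((a * b) ^ k)⁻¹ = (b * a) ^ k := by
    rw [← inv_pow, mul_inv_rev, ha', hb']
  have h2 : b * (a * b) ^ k = (b * a) ^ k * b := mul_pow_comm_aux b a k
  rw [h1]
  calc (b * a) ^ k * (b * a * b) * (a * b) ^ k
      = (b * a) ^ k * (b * a) * (b * (a * b) ^ k) := by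
        simp only [mul_assoc]
    _ = (b * a) ^ k * (b * a) * ((b * a) ^ k * b) := by rw [h2]
    _ = (b * a) ^ (2 * k + 1) * b := by
        rw [show (2 * k + 1) = k + 1 + k by omega, pow_add, pow_succ]
        simp only [mul_assoc]

private lemma nflip_mul_pow_apply (i j : B) (k : ℕ) (w : W) (ε : ZMod 2) :
    ((cs.nflip i * cs.nflip j) ^ k) (w, ε) =
      ((cs.simple i * cs.simple j) ^ k * w * ((cs.simple i * cs.simple j) ^ k)⁻¹,
        ε + ∑ n ∈ Finset.range (2 * k),
          chi w ((cs.simple j * cs.simple i) ^ n * cs.simple j)) := by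
  induction k with
  | zero =>
    show (w, ε) = _
    simp
  | succ k ih =>
    rw [pow_succ']
    show (cs.nflip i * cs.nflip j) (((cs.nflip i * cs.nflip j) ^ k) (w, ε)) = _
    rw [ih]
    show cs.nflip i (cs.nflip j _) = _
    set si := cs.simple i
    set sj := cs.simple j
    have hsi : si * si = 1 := cs.simple_mul_simple_self i
    have hsj : sj * sj = 1 := cs.simple_mul_simple_self j
    unfold nflip
    dsimp only
    have hconj : si * (sj * ((si * sj) ^ k * w * ((si * sj) ^ k)⁻¹) * sj) * si
        = (si * sj) ^ (k + 1) * w * ((si * sj) ^ (k + 1))⁻¹ := by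
      have hq : ((si * sj) ^ (k + 1))⁻¹ = ((si * sj) ^ k)⁻¹ * (sj * si) := by
        rw [pow_succ', mul_inv_rev, mul_inv_rev, inv_eq_of_mul_eq_one_right hsi,
          inv_eq_of_mul_eq_one_right hsj]
      rw [hq, pow_succ']
      simp only [mul_assoc]
    have hchi1 : chi ((si * sj) ^ k * w * ((si * sj) ^ k)⁻¹) sj
        = chi w ((sj * si) ^ (2 * k) * sj) := by
      rw [chi_conj, invol_conj1 si sj hsi hsj]
    have hchi2 : chi (sj * ((si * sj) ^ k * w * ((si * sj) ^ k)⁻¹) * sj) si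
        = chi w ((sj * si) ^ (2 * k + 1) * sj) := by
      have : sj * ((si * sj) ^ k * w * ((si * sj) ^ k)⁻¹) * sj
          = sj * ((si * sj) ^ k * w * ((si * sj) ^ k)⁻¹) * sj⁻¹ := by
        rw [inv_eq_of_mul_eq_one_right hsj]
      rw [this, chi_conj, chi_conj, inv_eq_of_mul_eq_one_right hsj]
      congr 1
      rw [invol_conj2 si sj hsi hsj k]
    rw [hconj, hchi1, hchi2]
    have hsum : ε + ∑ n ∈ Finset.range (2 * k), chi w ((sj * si) ^ n * sj)
        + chi w ((sj * si) ^ (2 * k) * sj) + chi w ((sj * si) ^ (2 * k + 1) * sj)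
        = ε + ∑ n ∈ Finset.range (2 * (k + 1)), chi w ((sj * si) ^ n * sj) := by
      rw [show 2 * (k + 1) = (2 * k + 1) + 1 by omega, Finset.sum_range_succ,
        Finset.sum_range_succ]
      ring
    rw [← hsum]

private lemma nflip_liftable : M.IsLiftable (fun i => cs.nflip i) := by
  intro i j
  funext p
  obtain ⟨w, ε⟩ := p
  show ((cs.nflip i * cs.nflip j) ^ M i j) (w, ε) = (w, ε)
  rw [nflip_mul_pow_apply, cs.simple_mul_simple_pow i j]
  have hg : (cs.simple j * cs.simple i) ^ M i j = 1 := cs.simple_mul_simple_pow' i j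
  have hper : ∀ n, chi w ((cs.simple j * cs.simple i) ^ (M i j + n) * cs.simple j)
      = chi w ((cs.simple j * cs.simple i) ^ n * cs.simple j) := by
    intro n
    rw [pow_add, hg, one_mul]
  rw [two_mul, Finset.sum_range_add]
  simp only [hper]
  rw [CharTwo.add_self_eq_zero, add_zero]
  simp
/-- The reflection-cocycle homomorphism. -/
noncomputable def nhom : W →* Function.End (W × ZMod 2) :=
  cs.lift ⟨fun i => cs.nflip i, cs.nflip_liftable⟩

/-- The reflection cocycle: `nf u w` is the mod-2 number of times `w` occurs in the
right inversion sequence of any word for `u`. -/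
noncomputable def nf (u w : W) : ZMod 2 := (cs.nhom u (w, 0)).2

lemma nhom_simple (i : B) : cs.nhom (cs.simple i) = cs.nflip i := by
  unfold nhom
  exact cs.lift_apply_simple cs.nflip_liftable i

lemma nf_one (w : W) : cs.nf 1 w = 0 := by
  unfold nf
  rw [map_one]
  rfl

lemma nhom_apply (u w : W) (ε : ZMod 2) :
    cs.nhom u (w, ε) = (u * w * u⁻¹, ε + cs.nf u w) := by
  revert w ε
  induction u using cs.simple_induction_left with
  | one =>
    intro w ε
    rw [map_one]
    show (w, ε) = _
    rw [cs.nf_one]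
    simp
  | mul_simple_left u i ih =>
    intro w ε
    have key : ∀ δ : ZMod 2, cs.nhom (cs.simple i * u) (w, δ)
        = (cs.simple i * (u * w * u⁻¹) * cs.simple i,
            δ + (cs.nf u w + chi (u * w * u⁻¹) (cs.simple i))) := by
      intro δ
      rw [map_mul]
      show cs.nhom (cs.simple i) (cs.nhom u (w, δ)) = _
      rw [ih w δ, nhom_simple]
      show (cs.simple i * (u * w * u⁻¹) * cs.simple i,
        (δ + cs.nf u w) + chi (u * w * u⁻¹) (cs.simple i)) = _
      rw [add_assoc]
    have hnf : cs.nf (cs.simple i * u) w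
        = cs.nf u w + chi (u * w * u⁻¹) (cs.simple i) := by
      show (cs.nhom (cs.simple i * u) (w, 0)).2 = _
      rw [key 0]
      show 0 + (cs.nf u w + chi (u * w * u⁻¹) (cs.simple i)) = _
      rw [zero_add]
    rw [key ε, hnf]
    have : cs.simple i * (u * w * u⁻¹) * cs.simple i
        = (cs.simple i * u) * w * (cs.simple i * u)⁻¹ := by
      rw [mul_inv_rev, inv_simple]
      simp only [mul_assoc]
    rw [this]

lemma nf_mul (a b w : W) : cs.nf (a * b) w = cs.nf b w + cs.nf a (b * w * b⁻¹) := by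
  unfold nf
  rw [map_mul]
  show (cs.nhom a (cs.nhom b (w, 0))).2 = _
  rw [cs.nhom_apply b w 0, cs.nhom_apply a (b * w * b⁻¹) (0 + cs.nf b w)]
  simp [nf, add_assoc]

lemma nf_simple (i : B) (w : W) : cs.nf (cs.simple i) w = chi w (cs.simple i) := by
  unfold nf
  rw [nhom_simple]
  show 0 + chi w (cs.simple i) = _
  rw [zero_add]

lemma nf_inv_conj (a w : W) : cs.nf a (a⁻¹ * w * a) = cs.nf a⁻¹ w := by
  have h := cs.nf_mul a a⁻¹ w
  rw [mul_inv_cancel, cs.nf_one, inv_inv] at h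
  have dich : ∀ x y : ZMod 2, 0 = x + y → y = x := by decide
  exact dich _ _ h

lemma nf_reflection_self {t : W} (ht : cs.IsReflection t) : cs.nf t t = 1 := by
  obtain ⟨v, i, rfl⟩ := ht
  set t := v * cs.simple i * v⁻¹ with hts
  have h1 : cs.nf t t = cs.nf (cs.simple i * v⁻¹) t
      + cs.nf v ((cs.simple i * v⁻¹) * t * (cs.simple i * v⁻¹)⁻¹) := by
    rw [show t = v * (cs.simple i * v⁻¹) by simp [hts, mul_assoc]]
    rw [cs.nf_mul v (cs.simple i * v⁻¹)]
  have h2 : (cs.simple i * v⁻¹) * t * (cs.simple i * v⁻¹)⁻¹ = cs.simple i := by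
    rw [mul_inv_rev, inv_inv, inv_simple, hts]
    simp only [mul_assoc, inv_mul_cancel_left, simple_mul_simple_self]
    simp
  have h3 : cs.nf (cs.simple i * v⁻¹) t = cs.nf v⁻¹ t + chi (v⁻¹ * t * v) (cs.simple i) := by
    rw [cs.nf_mul (cs.simple i) v⁻¹ t, inv_inv, cs.nf_simple]
  have h4 : v⁻¹ * t * v = cs.simple i := by
    rw [hts]
    simp only [mul_assoc, inv_mul_cancel_left, inv_mul_cancel]
    simp
  have h5 : cs.nf v⁻¹ t = cs.nf v (cs.simple i) := by
    have h := cs.nf_inv_conj v⁻¹ (cs.simple i)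
    rw [inv_inv] at h
    rw [hts]
    exact h
  have hchi : chi (v⁻¹ * t * v) (cs.simple i) = 1 := by
    rw [h4]
    unfold chi
    rw [if_pos rfl]
  rw [h1, h3, h5, hchi, h2]
  have : ∀ x : ZMod 2, x + 1 + x = 1 := by decide
  exact this _

lemma mem_rightInvSeq_of_nf_ne_zero (ω : List B) (t : W) (h : cs.nf (cs.wordProd ω) t ≠ 0) :
    t ∈ cs.rightInvSeq ω := by
  induction ω with
  | nil =>
    rw [wordProd_nil, cs.nf_one] at h
    exact absurd rfl h
  | cons i ω' ih =>
    rw [wordProd_cons, cs.nf_mul] at h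
    have hris : cs.rightInvSeq (i :: ω')
        = ((cs.wordProd ω')⁻¹ * cs.simple i * cs.wordProd ω') :: cs.rightInvSeq ω' := rfl
    by_cases hc : cs.wordProd ω' * t * (cs.wordProd ω')⁻¹ = cs.simple i
    · have : t = (cs.wordProd ω')⁻¹ * cs.simple i * cs.wordProd ω' :=
        (conj_eq_iff' _ t _).mp hc
      rw [hris, this]
      exact List.mem_cons_self
    · rw [cs.nf_simple, show chi (cs.wordProd ω' * t * (cs.wordProd ω')⁻¹) (cs.simple i) = 0
        from if_neg hc, add_zero] at h
      rw [hris]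
      exact List.mem_cons_of_mem _ (ih h)

lemma length_mul_lt_of_nf_eq_one {w t : W} (h : cs.nf w t = 1) :
    cs.length (w * t) < cs.length w := by
  obtain ⟨ω, hred, hw⟩ := cs.exists_reduced_word' w
  subst hw
  have hmem := cs.mem_rightInvSeq_of_nf_ne_zero ω t (by rw [h]; exact one_ne_zero)
  exact (cs.isRightInversion_of_mem_rightInvSeq hred hmem).2

lemma nf_eq_one_of_lt {w t : W} (ht : cs.IsReflection t)
    (h : cs.length (w * t) < cs.length w) : cs.nf w t = 1 := by
  have h1 : w = (w * t) * t := by rw [mul_assoc, ht.mul_self, mul_one]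
  have h2 : cs.nf w t = cs.nf t t + cs.nf (w * t) (t * t * t⁻¹) := by
    nth_rewrite 1 [h1]
    rw [cs.nf_mul]
  have h3 : t * t * t⁻¹ = t := by rw [ht.mul_self, one_mul, ht.inv]
  rw [h3, cs.nf_reflection_self ht] at h2
  have dich : ∀ x : ZMod 2, x = 0 ∨ x = 1 := by decide
  rcases dich (cs.nf (w * t) t) with h4 | h4
  · rw [h4, add_zero] at h2
    exact h2
  · exfalso
    have := cs.length_mul_lt_of_nf_eq_one h4
    rw [mul_assoc, ht.mul_self, mul_one] at this
    omega

/-- The (strong) exchange property, for simple reflections. -/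
lemma exchange_right {ω : List B} {i : B}
    (h : cs.length (cs.wordProd ω * cs.simple i) < cs.length (cs.wordProd ω)) :
    ∃ j, j < ω.length ∧ cs.wordProd ω * cs.simple i = cs.wordProd (ω.eraseIdx j) := by
  have h1 : cs.nf (cs.wordProd ω) (cs.simple i) = 1 :=
    cs.nf_eq_one_of_lt (cs.isReflection_simple i) h
  have hmem := cs.mem_rightInvSeq_of_nf_ne_zero ω (cs.simple i) (by rw [h1]; exact one_ne_zero)
  obtain ⟨j, hj, hgd⟩ := List.mem_iff_getElem.mp hmem
  refine ⟨j, by simpa using hj, ?_⟩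
  rw [← hgd, ← List.getD_eq_getElem _ 1 hj]
  exact cs.wordProd_mul_getD_rightInvSeq ω j

/-- Left handed weak version of the exchange property. -/
lemma exchange_left {ω : List B} {i : B}
    (h : cs.length (cs.simple i * cs.wordProd ω) < cs.length (cs.wordProd ω)) :
    ∃ ω₂ : List B, (∀ b ∈ ω₂, b ∈ ω) ∧ ω₂.length + 1 = ω.length ∧
      cs.simple i * cs.wordProd ω = cs.wordProd ω₂ := by
  have h1 : cs.length (cs.wordProd ω.reverse * cs.simple i)
      < cs.length (cs.wordProd ω.reverse) := by
    rw [wordProd_reverse]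
    rw [show (cs.wordProd ω)⁻¹ * cs.simple i = (cs.simple i * cs.wordProd ω)⁻¹ by
      rw [mul_inv_rev, inv_simple], cs.length_inv, cs.length_inv]
    exact h
  obtain ⟨j, hj, heq⟩ := cs.exchange_right h1
  rw [List.length_reverse] at hj
  refine ⟨(ω.reverse.eraseIdx j).reverse, ?_, ?_, ?_⟩
  · intro b hb
    rw [List.mem_reverse] at hb
    have := List.mem_of_mem_eraseIdx hb
    rwa [List.mem_reverse] at this
  · rw [List.length_reverse, List.length_eraseIdx_add_one (by simpa using hj)]
    simp
  · rw [wordProd_reverse, ← heq, wordProd_reverse, mul_inv_rev, inv_inv, inv_simple]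
/-! ### Basic lemmas about `projSimple` and `projWord` -/

lemma projWord_nil (x : W) : cs.projWord [] x = x := rfl

lemma projWord_cons (i : B) (ω : List B) (x : W) :
    cs.projWord (i :: ω) x = cs.projSimple i (cs.projWord ω x) := rfl

lemma length_projSimple_le (i : B) (x : W) :
    cs.length (cs.projSimple i x) ≤ cs.length x := by
  unfold projSimple
  split_ifs with h
  · omega
  · omega

lemma length_le_projSimple (i : B) (x : W) :
    cs.length x ≤ cs.length (cs.projSimple i x) + 1 := by
  have hge := cs.length_mul_ge_length_sub_length x (cs.simple i)
  rw [cs.length_simple] at hge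
  unfold projSimple
  split_ifs with h
  · omega
  · omega

lemma length_projWord_le (ω : List B) (x : W) :
    cs.length (cs.projWord ω x) ≤ cs.length x := by
  induction ω with
  | nil => exact le_refl _
  | cons i ω ih =>
    rw [projWord_cons]
    exact le_trans (cs.length_projSimple_le i _) ih

lemma length_le_projWord_add (ω : List B) (x : W) :
    cs.length x ≤ cs.length (cs.projWord ω x) + ω.length := by
  induction ω with
  | nil => simp [projWord_nil]
  | cons i ω ih =>
    rw [projWord_cons]
    have := cs.length_le_projSimple i (cs.projWord ω x)
    simp only [List.length_cons]
    omega

lemma inv_mul_projWord_mem (ω : List B) (J : Set B) (hJ : ∀ i ∈ ω, i ∈ J) (x : W) :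
    x⁻¹ * cs.projWord ω x ∈ cs.parabolic J := by
  induction ω with
  | nil =>
    rw [projWord_nil, inv_mul_cancel]
    exact one_mem _
  | cons i ω ih =>
    rw [projWord_cons]
    unfold projSimple
    split_ifs with h
    · rw [← mul_assoc]
      exact mul_mem (ih fun b hb => hJ b (List.mem_cons_of_mem _ hb))
        (Subgroup.subset_closure (Set.mem_image_of_mem _ (hJ i (List.mem_cons_self))))
    · exact ih fun b hb => hJ b (List.mem_cons_of_mem _ hb)

lemma projWord_fixed (ω : List B) (y : W)
    (h : ∀ i ∈ ω, ¬ cs.length (y * cs.simple i) < cs.length y) :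
    cs.projWord ω y = y := by
  induction ω with
  | nil => rfl
  | cons i ω ih =>
    rw [projWord_cons, ih fun b hb => h b (List.mem_cons_of_mem _ hb)]
    unfold projSimple
    rw [if_neg (h i (List.mem_cons_self))]

lemma no_descent_of_projWord_fixed (ω : List B) (y : W) (h : cs.projWord ω y = y) :
    ∀ i ∈ ω, ¬ cs.length (y * cs.simple i) < cs.length y := by
  induction ω with
  | nil => intro i hi; simp at hi
  | cons i ω ih =>
    rw [projWord_cons] at h
    have h1 : cs.length (cs.projWord ω y) ≤ cs.length y := cs.length_projWord_le ω y
    have h2 : cs.length (cs.projSimple i (cs.projWord ω y)) ≤ cs.length (cs.projWord ω y) :=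
      cs.length_projSimple_le i _
    rw [h] at h2
    have h3 : cs.projSimple i (cs.projWord ω y) = cs.projWord ω y := by
      unfold projSimple
      split_ifs with hd
      · exfalso
        have hys : cs.projSimple i (cs.projWord ω y) = cs.projWord ω y * cs.simple i := by
          unfold projSimple
          rw [if_pos hd]
        rw [hys] at h
        rw [h] at hd
        omega
      · rfl
    rw [h3] at h
    intro b hb
    rcases List.mem_cons.mp hb with rfl | hb'
    · intro hlt
      have h4 : cs.projSimple b (cs.projWord ω y) = y := by rw [h3, h]
      rw [h] at h3
      have h5 : cs.projSimple b y = y * cs.simple b := by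
        unfold projSimple
        rw [if_pos hlt]
      rw [h5] at h3
      have := cs.length_mul_simple_ne y b
      rw [h3] at this
      exact this rfl
    · exact ih h b hb'

/-- Key additivity: if `ω` is reduced then `ℓ(Pω(x) ⬝ π ω) = ℓ(Pω(x)) + ℓ(π ω)`. -/
lemma length_projWord_mul_wordProd (ω : List B) :
    cs.IsReduced ω → ∀ x : W,
      cs.length (cs.projWord ω x * cs.wordProd ω)
        = cs.length (cs.projWord ω x) + cs.length (cs.wordProd ω) := by
  induction ω with
  | nil => intro _ x; simp [projWord_nil, wordProd_nil]
  | cons i ω ih =>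
    intro hred x
    have hred' : cs.IsReduced ω := by
      have := hred.drop 1
      simpa using this
    have hlv : cs.length (cs.wordProd ω) = ω.length := hred'
    have hltot : cs.length (cs.wordProd (i :: ω)) = ω.length + 1 := by
      have : cs.length (cs.wordProd (i :: ω)) = (i :: ω).length := hred
      simpa using this
    have hsv : cs.length (cs.simple i * cs.wordProd ω) = cs.length (cs.wordProd ω) + 1 := by
      rw [← wordProd_cons, hltot, hlv]
    rw [wordProd_cons, projWord_cons]
    by_cases hd : cs.length (cs.projWord ω x * cs.simple i) < cs.length (cs.projWord ω x)
    · have hps : cs.projSimple i (cs.projWord ω x) = cs.projWord ω x * cs.simple i := by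
        unfold projSimple
        rw [if_pos hd]
      have hyl : cs.length (cs.projWord ω x * cs.simple i) + 1 = cs.length (cs.projWord ω x) := by
        rcases cs.length_mul_simple (cs.projWord ω x) i with h | h <;> omega
      rw [hps]
      have hcan : cs.projWord ω x * cs.simple i * (cs.simple i * cs.wordProd ω)
          = cs.projWord ω x * cs.wordProd ω := by
        rw [← mul_assoc, mul_assoc (cs.projWord ω x), cs.simple_mul_simple_self, mul_one]
      rw [hcan, ih hred' x, hsv]
      omega
    · have hps : cs.projSimple i (cs.projWord ω x) = cs.projWord ω x := by
        unfold projSimple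
        rw [if_neg hd]
      rw [hps, hsv]
      have hub : cs.length (cs.projWord ω x * (cs.simple i * cs.wordProd ω))
          ≤ cs.length (cs.projWord ω x) + (cs.length (cs.wordProd ω) + 1) := by
        have := cs.length_mul_le (cs.projWord ω x) (cs.simple i * cs.wordProd ω)
        rw [hsv] at this
        omega
      have htrefl : cs.IsReflection ((cs.wordProd ω)⁻¹ * cs.simple i * cs.wordProd ω) :=
        ⟨(cs.wordProd ω)⁻¹, i, by rw [inv_inv]⟩
      have hyst : cs.projWord ω x * (cs.simple i * cs.wordProd ω)
          = (cs.projWord ω x * cs.wordProd ω)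
            * ((cs.wordProd ω)⁻¹ * cs.simple i * cs.wordProd ω) := by
        group
      have hnf : cs.nf (cs.projWord ω x * cs.wordProd ω)
          ((cs.wordProd ω)⁻¹ * cs.simple i * cs.wordProd ω) = 0 := by
        rw [cs.nf_mul]
        have e1 : cs.wordProd ω * ((cs.wordProd ω)⁻¹ * cs.simple i * cs.wordProd ω)
            * (cs.wordProd ω)⁻¹ = cs.simple i := by
          group
        have e2 : cs.nf (cs.wordProd ω) ((cs.wordProd ω)⁻¹ * cs.simple i * cs.wordProd ω)
            = cs.nf (cs.wordProd ω)⁻¹ (cs.simple i) :=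
          cs.nf_inv_conj (cs.wordProd ω) (cs.simple i)
        rw [e1, e2]
        have dich : ∀ z : ZMod 2, z = 0 ∨ z = 1 := by decide
        have hz1 : cs.nf (cs.wordProd ω)⁻¹ (cs.simple i) = 0 := by
          rcases dich (cs.nf (cs.wordProd ω)⁻¹ (cs.simple i)) with hz | hz
          · exact hz
          · exfalso
            have hlt := cs.length_mul_lt_of_nf_eq_one hz
            rw [show (cs.wordProd ω)⁻¹ * cs.simple i = (cs.simple i * cs.wordProd ω)⁻¹ by
              rw [mul_inv_rev, inv_simple], cs.length_inv, cs.length_inv] at hlt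
            omega
        have hz2 : cs.nf (cs.projWord ω x) (cs.simple i) = 0 := by
          rcases dich (cs.nf (cs.projWord ω x) (cs.simple i)) with hz | hz
          · exact hz
          · exact absurd (cs.length_mul_lt_of_nf_eq_one hz) hd
        rw [hz1, hz2, add_zero]
      have hne := htrefl.length_mul_left_ne (cs.projWord ω x * cs.wordProd ω)
      have hnlt : ¬ cs.length ((cs.projWord ω x * cs.wordProd ω)
          * ((cs.wordProd ω)⁻¹ * cs.simple i * cs.wordProd ω))
          < cs.length (cs.projWord ω x * cs.wordProd ω) := by
        intro hlt
        have := cs.nf_eq_one_of_lt htrefl hlt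
        rw [hnf] at this
        exact absurd this (by decide)
      have hihx := ih hred' x
      rw [hyst]
      rw [hyst] at hub
      omega

/-! ### Parabolic subgroups -/

lemma wordProd_mem_parabolic (J : Set B) (ω : List B) (h : ∀ i ∈ ω, i ∈ J) :
    cs.wordProd ω ∈ cs.parabolic J := by
  induction ω with
  | nil =>
    rw [wordProd_nil]
    exact one_mem _
  | cons i ω ih =>
    rw [wordProd_cons]
    exact mul_mem
      (Subgroup.subset_closure (Set.mem_image_of_mem _ (h i (List.mem_cons_self))))
      (ih fun b hb => h b (List.mem_cons_of_mem _ hb))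

lemma exists_reduced_word_parabolic (J : Set B) (w : W) (hw : w ∈ cs.parabolic J) :
    ∃ ν : List B, cs.IsReduced ν ∧ (∀ i ∈ ν, i ∈ J) ∧ cs.wordProd ν = w := by
  have step : ∀ w' : W, (∃ ν, cs.IsReduced ν ∧ (∀ i ∈ ν, i ∈ J) ∧ cs.wordProd ν = w') →
      ∀ t ∈ J, ∃ ν, cs.IsReduced ν ∧ (∀ i ∈ ν, i ∈ J) ∧
        cs.wordProd ν = w' * cs.simple t := by
    rintro w' ⟨ν, hred, hsub, rfl⟩ t ht
    have hredeq : cs.length (cs.wordProd ν) = ν.length := hred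
    rcases Nat.lt_or_ge (cs.length (cs.wordProd ν * cs.simple t))
      (cs.length (cs.wordProd ν)) with hlt | hge
    · obtain ⟨j, hj, heq⟩ := cs.exchange_right hlt
      refine ⟨ν.eraseIdx j, ?_, ?_, heq.symm⟩
      · show cs.length (cs.wordProd (ν.eraseIdx j)) = (ν.eraseIdx j).length
        rw [← heq]
        have hl : cs.length (cs.wordProd ν * cs.simple t) + 1 = cs.length (cs.wordProd ν) := by
          rcases cs.length_mul_simple (cs.wordProd ν) t with h | h <;> omega
        have hlen := List.length_eraseIdx_add_one hj
        omega
      · intro b hb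
        exact hsub b (List.mem_of_mem_eraseIdx hb)
    · have hone : cs.wordProd [t] = cs.simple t := by
        rw [wordProd_cons, wordProd_nil, mul_one]
      refine ⟨ν ++ [t], ?_, ?_, by rw [wordProd_append, hone]⟩
      · show cs.length (cs.wordProd (ν ++ [t])) = (ν ++ [t]).length
        rw [wordProd_append, hone]
        have hplus : cs.length (cs.wordProd ν * cs.simple t)
            = cs.length (cs.wordProd ν) + 1 := by
          rcases cs.length_mul_simple (cs.wordProd ν) t with h | h
          · omega
          · have := cs.length_mul_simple_ne (cs.wordProd ν) t
            omega
        rw [hplus]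
        simp only [List.length_append, List.length_cons, List.length_nil]
        omega
      · intro b hb
        rcases List.mem_append.mp hb with hb' | hb'
        · exact hsub b hb'
        · rw [List.mem_singleton.mp hb']
          exact ht
  have step2 : ∀ (l : List B), (∀ i ∈ l, i ∈ J) → ∀ w' : W,
      (∃ ν, cs.IsReduced ν ∧ (∀ i ∈ ν, i ∈ J) ∧ cs.wordProd ν = w') →
      ∃ ν, cs.IsReduced ν ∧ (∀ i ∈ ν, i ∈ J) ∧ cs.wordProd ν = w' * cs.wordProd l := by
    intro l
    induction l with
    | nil =>
      intro _ w' h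
      simpa [wordProd_nil] using h
    | cons t l ih =>
      intro hsub w' h
      rw [wordProd_cons, ← mul_assoc]
      exact ih (fun b hb => hsub b (List.mem_cons_of_mem _ hb)) (w' * cs.simple t)
        (step w' h t (hsub t (List.mem_cons_self)))
  induction hw using Subgroup.closure_induction with
  | mem x hx =>
    obtain ⟨i, hi, rfl⟩ := hx
    refine ⟨[i], ?_, ?_, ?_⟩
    · show cs.length (cs.wordProd [i]) = ([i] : List B).length
      rw [wordProd_cons, wordProd_nil, mul_one, cs.length_simple]
      rfl
    · intro b hb
      rw [List.mem_singleton.mp hb]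
      exact hi
    · rw [wordProd_cons, wordProd_nil, mul_one]
  | one =>
    exact ⟨[], by show cs.length (cs.wordProd []) = 0; simp, by simp, by rw [wordProd_nil]⟩
  | mul x y hx hy ihx ihy =>
    obtain ⟨νy, hyred, hysub, hyeq⟩ := ihy
    have := step2 νy hysub x ihx
    rwa [hyeq] at this
  | inv x hx ihx =>
    obtain ⟨ν, hred, hsub, hν⟩ := ihx
    refine ⟨ν.reverse, (cs.isReduced_reverse_iff ν).mpr hred, ?_, ?_⟩
    · intro b hb
      exact hsub b (List.mem_reverse.mp hb)
    · rw [wordProd_reverse, hν]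

lemma simple_mem_parabolic_of_reduced (J : Set B) :
    ∀ ω : List B, cs.IsReduced ω → cs.wordProd ω ∈ cs.parabolic J →
      ∀ i ∈ ω, cs.simple i ∈ cs.parabolic J := by
  intro ω
  induction ω with
  | nil => intro _ _ i hi; simp at hi
  | cons i₀ ω ih =>
    intro hred hmem b hb
    have hred' : cs.IsReduced ω := by
      have := hred.drop 1
      simpa using this
    have hlen : cs.length (cs.wordProd (i₀ :: ω)) = ω.length + 1 := by
      have : cs.length (cs.wordProd (i₀ :: ω)) = (i₀ :: ω).length := hred
      simpa using this
    have hcancel : cs.simple i₀ * cs.wordProd (i₀ :: ω) = cs.wordProd ω := by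
      rw [wordProd_cons, ← mul_assoc, cs.simple_mul_simple_self, one_mul]
    have hdesc : cs.length (cs.simple i₀ * cs.wordProd (i₀ :: ω))
        < cs.length (cs.wordProd (i₀ :: ω)) := by
      rw [hcancel, hlen]
      have h1 : cs.length (cs.wordProd ω) = ω.length := hred'
      omega
    obtain ⟨ν, hνred, hνsub, hνeq⟩ := cs.exists_reduced_word_parabolic J _ hmem
    have hdesc' : cs.length (cs.simple i₀ * cs.wordProd ν) < cs.length (cs.wordProd ν) := by
      rw [hνeq]
      exact hdesc
    obtain ⟨ω₂, hω₂sub, _, heq⟩ := cs.exchange_left hdesc'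
    have hsi : cs.simple i₀ ∈ cs.parabolic J := by
      have h1 : cs.simple i₀ = cs.wordProd ω₂ * (cs.wordProd (i₀ :: ω))⁻¹ := by
        rw [← heq, hνeq]
        group
      rw [h1]
      exact mul_mem
        (cs.wordProd_mem_parabolic J ω₂ (fun c hc => hνsub c (hω₂sub c hc)))
        (inv_mem hmem)
    rcases List.mem_cons.mp hb with rfl | hb'
    · exact hsi
    · have htail : cs.wordProd ω ∈ cs.parabolic J := by
        rw [← hcancel]
        exact mul_mem hsi hmem
      exact ih hred' htail b hb'

end CoxeterSystem

theorem stmt_12 (cs : CoxeterSystem M W) (u : W) :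
    (∀ ω : List B, cs.IsReduced ω → cs.wordProd ω = u →
      cs.projWord ω ∘ cs.projWord ω = cs.projWord ω) ↔
    (∃ J : Set B, u ∈ cs.parabolic J ∧ ∀ v ∈ cs.parabolic J, cs.length v ≤ cs.length u) := by
  constructor
  · intro h
    obtain ⟨ω₀, hred₀, hu⟩ := cs.exists_reduced_word' u
    refine ⟨{i | i ∈ ω₀}, ?_, ?_⟩
    · rw [hu]
      exact cs.wordProd_mem_parabolic _ ω₀ (fun i hi => hi)
    · intro v hv
      have hidem := h ω₀ hred₀ hu.symm
      have hfix : cs.projWord ω₀ (cs.projWord ω₀ v⁻¹) = cs.projWord ω₀ v⁻¹ :=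
        congrFun hidem v⁻¹
      have hnod := cs.no_descent_of_projWord_fixed ω₀ _ hfix
      have hymem : cs.projWord ω₀ v⁻¹ ∈ cs.parabolic {i | i ∈ ω₀} := by
        have h1 := cs.inv_mul_projWord_mem ω₀ {i | i ∈ ω₀} (fun i hi => hi) v⁻¹
        have h2 : cs.projWord ω₀ v⁻¹ = v⁻¹ * ((v⁻¹)⁻¹ * cs.projWord ω₀ v⁻¹) := by
          rw [inv_inv, inv_mul_cancel_left]
        rw [h2]
        exact mul_mem (inv_mem hv) h1
      have hy1 : cs.projWord ω₀ v⁻¹ = 1 := by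
        by_contra hne
        obtain ⟨ν, hνred, hνsub, hνeq⟩ :=
          cs.exists_reduced_word_parabolic _ _ hymem
        have hνne : ν ≠ [] := by
          rintro rfl
          rw [wordProd_nil] at hνeq
          exact hne hνeq.symm
        rcases ν.eq_nil_or_concat with rfl | ⟨ν', t, rfl⟩
        · exact hνne rfl
        · rw [List.concat_eq_append] at hνred hνsub hνeq
          have h1 : cs.projWord ω₀ v⁻¹ * cs.simple t = cs.wordProd ν' := by
            rw [← hνeq, wordProd_append, wordProd_cons, wordProd_nil, mul_one,
              mul_assoc, cs.simple_mul_simple_self, mul_one]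
          have h2 : cs.length (cs.wordProd ν') ≤ ν'.length := cs.length_wordProd_le ν'
          have h3 : cs.length (cs.projWord ω₀ v⁻¹) = ν'.length + 1 := by
            rw [← hνeq]
            have : cs.length (cs.wordProd (ν' ++ [t])) = (ν' ++ [t]).length := hνred
            simpa using this
          have hdesc : cs.length (cs.projWord ω₀ v⁻¹ * cs.simple t)
              < cs.length (cs.projWord ω₀ v⁻¹) := by
            rw [h1, h3]
            omega
          exact hnod t (hνsub t (by simp)) hdesc
      have hlen := cs.length_le_projWord_add ω₀ v⁻¹
      rw [hy1, cs.length_one] at hlen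
      have hlu : cs.length u = ω₀.length := by
        rw [hu]
        exact hred₀
      calc cs.length v = cs.length v⁻¹ := (cs.length_inv v).symm
        _ ≤ cs.length u := by omega
  · rintro ⟨J, huJ, hmax⟩ ω hred hω
    funext x
    show cs.projWord ω (cs.projWord ω x) = cs.projWord ω x
    apply cs.projWord_fixed
    intro i hi hdesc
    have hsimem : cs.simple i ∈ cs.parabolic J := by
      apply cs.simple_mem_parabolic_of_reduced J ω hred ?_ i hi
      rw [hω]
      exact huJ
    have hsu : cs.length (cs.simple i * u) < cs.length u := by
      have h1 : cs.simple i * u ∈ cs.parabolic J := mul_mem hsimem huJ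
      have h2 := hmax _ h1
      have h3 := cs.length_simple_mul_ne u i
      omega
    have hinv := cs.length_projWord_mul_wordProd ω hred x
    rw [hω] at hinv
    have hsplit : cs.projWord ω x * u
        = (cs.projWord ω x * cs.simple i) * (cs.simple i * u) := by
      rw [mul_assoc, ← mul_assoc (cs.simple i), cs.simple_mul_simple_self, one_mul]
    have hub := cs.length_mul_le (cs.projWord ω x * cs.simple i) (cs.simple i * u)
    rw [← hsplit] at hub
    omega
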